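/- Let |φ⟩ be a unit vector orthogonal to a unit vector |ψ⟩. The projection of |φ⟩⊗|ψ⟩^{⊗l} onto the orthogonal complement of the symmetric subspace of H^{⊗(l+1)} equals (l/(l+1))·|φ⟩⊗|ψ⟩^{⊗l} − (1/(l+1))·Σ_{i=1}^{l} |ψ⟩^{⊗i}⊗|φ⟩⊗|ψ⟩^{⊗(l−i)}. -/

import Mathlib

open PiTensorProduct

/-- Let `φ` be a unit vector orthogonal to a unit vector `ψ`.  The projection of
`φ ⊗ ψ^{⊗l}` onto the orthogonal complement of the symmetric subspace of `H^{⊗(l+1)}`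
(i.e. `(id - Π_sym)` applied to it, with `Π_sym = (1/(l+1)!) ∑_{π} P_π`) equals
`(l/(l+1)) • φ ⊗ ψ^{⊗l} - (1/(l+1)) • ∑_{i=1}^{l} ψ^{⊗i} ⊗ φ ⊗ ψ^{⊗(l-i)}`. -/
theorem antisymmetric_part_of_one_defect
    {H : Type*} [NormedAddCommGroup H] [InnerProductSpace ℂ H] [FiniteDimensional ℂ H]
    (l : ℕ) (φ ψ : H) (hφ : ‖φ‖ = 1) (hψ : ‖ψ‖ = 1)
    (horth : inner (𝕜 := ℂ) φ ψ = 0) :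
    PiTensorProduct.tprod ℂ (fun j : Fin (l + 1) => if j = 0 then φ else ψ)
      - (((l + 1).factorial : ℂ))⁻¹ •
          ∑ π : Equiv.Perm (Fin (l + 1)),
            (PiTensorProduct.reindex ℂ (fun _ : Fin (l + 1) => H) π)
              (PiTensorProduct.tprod ℂ (fun j => if j = 0 then φ else ψ))
    = ((l : ℂ) / ((l : ℂ) + 1)) •
        PiTensorProduct.tprod ℂ (fun j : Fin (l + 1) => if j = 0 then φ else ψ)
      - ((l : ℂ) + 1)⁻¹ •
          ∑ i ∈ Finset.univ.erase (0 : Fin (l + 1)),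
            PiTensorProduct.tprod ℂ (fun j => if j = i then φ else ψ) := by
  set v : Fin (l + 1) → PiTensorProduct ℂ (fun _ : Fin (l+1) => H) :=
    fun i => PiTensorProduct.tprod ℂ (fun j : Fin (l + 1) => if j = i then φ else ψ) with hv
  have h1 : ∀ π : Equiv.Perm (Fin (l + 1)),
      (PiTensorProduct.reindex ℂ (fun _ : Fin (l + 1) => H) π)
        (PiTensorProduct.tprod ℂ (fun j => if j = 0 then φ else ψ)) = v (π 0) := by
    intro π
    rw [PiTensorProduct.reindex_tprod]
    congr 1
    funext j
    exact if_congr (Equiv.symm_apply_eq π) rfl rfl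
  have h2 : ∑ π : Equiv.Perm (Fin (l + 1)),
      (PiTensorProduct.reindex ℂ (fun _ : Fin (l + 1) => H) π)
        (PiTensorProduct.tprod ℂ (fun j => if j = 0 then φ else ψ))
      = (l.factorial : ℂ) • ∑ i, v i := by
    simp only [h1]
    rw [← Fintype.sum_equiv Equiv.Perm.decomposeFin.symm (fun p => v p.1)
      (fun π => v (π 0)) (by simp)]
    rw [Fintype.sum_prod_type, Finset.smul_sum]
    refine Finset.sum_congr rfl fun i _ => ?_
    rw [Nat.cast_smul_eq_nsmul]
    simp [Finset.sum_const, Finset.card_univ, Fintype.card_perm, Fintype.card_fin]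
  rw [h2]
  have h3 : ∑ i, v i = v 0 + ∑ i ∈ Finset.univ.erase (0 : Fin (l + 1)), v i :=
    (Finset.add_sum_erase _ _ (Finset.mem_univ _)).symm
  rw [h3]
  have hl1 : ((l : ℂ) + 1) ≠ 0 := Nat.cast_add_one_ne_zero l
  have hf : ((l.factorial : ℂ)) ≠ 0 := by exact_mod_cast Nat.factorial_ne_zero l
  have hfac : (((l + 1).factorial : ℂ)) = ((l : ℂ) + 1) * (l.factorial : ℂ) := by
    rw [Nat.factorial_succ]; push_cast; ring
  rw [hfac]
  show v 0 - _ = _ • v 0 - _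
  match_scalars
  · field_simp; ring
  · field_simp
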